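/- Let m, t be coprime positive integers, let t⁻¹ denote the inverse of t modulo m and m⁻¹ the inverse of m modulo t, and let α be a positive integer. Then e(α·t⁻¹/m) = e(-α·m⁻¹/t) + O(α/(mt)), with an absolute implied constant. -/

import Mathlib

open Complex

/-- e(t) = exp(2πi t) -/
noncomputable def e (t : ℝ) : ℂ := Complex.exp (2 * Real.pi * Complex.I * t)

lemma e_add_int (x : ℝ) (n : ℤ) : e (x + n) = e x := by
  unfold e
  push_cast
  rw [mul_add, Complex.exp_add]
  have : (2 : ℂ) * Real.pi * I * n = n * (2 * Real.pi * I) := by ring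
  rw [this, Complex.exp_int_mul_two_pi_mul_I, mul_one]

lemma e_add (x y : ℝ) : e (x + y) = e x * e y := by
  unfold e
  push_cast
  rw [mul_add, Complex.exp_add]

lemma norm_e (x : ℝ) : ‖e x‖ = 1 := by
  unfold e
  have : (2 : ℂ) * Real.pi * I * x = (2 * Real.pi * x : ℝ) * I := by push_cast; ring
  rw [this]
  exact Complex.norm_exp_ofReal_mul_I _

lemma norm_e_sub_one (x : ℝ) (hx : 0 ≤ x) : ‖e x - 1‖ ≤ 4 * Real.pi * x := by
  have hz : (2 : ℂ) * Real.pi * I * x = ((2 * Real.pi * x : ℝ) : ℂ) * I := by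
    push_cast; ring
  have habs : ‖(((2 * Real.pi * x : ℝ) : ℂ) * I)‖ = 2 * Real.pi * x := by
    rw [norm_mul, Complex.norm_I, mul_one, Complex.norm_real, Real.norm_eq_abs]
    exact abs_of_nonneg (by positivity)
  by_cases h : 2 * Real.pi * x ≤ 1
  · have := Complex.norm_exp_sub_one_le (x := ((2 * Real.pi * x : ℝ) : ℂ) * I)
      (by rw [habs]; exact h)
    rw [habs] at this
    unfold e
    rw [hz]
    calc ‖Complex.exp (((2 * Real.pi * x : ℝ) : ℂ) * I) - 1‖
        ≤ 2 * (2 * Real.pi * x) := this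
      _ = 4 * Real.pi * x := by ring
  · push_neg at h
    calc ‖e x - 1‖ ≤ ‖e x‖ + ‖(1 : ℂ)‖ := norm_sub_le _ _
      _ = 2 := by rw [norm_e, norm_one]; norm_num
      _ ≤ 4 * Real.pi * x := by nlinarith

/-- If `t·tinv ≡ 1 (mod m)` and `m·minv ≡ 1 (mod t)`, then for a positive integer `α`,
`e(α·t⁻¹/m) = e(-α·m⁻¹/t) + O(α/(mt))` with an absolute implied constant. -/
theorem inverse_fractions_estimate :
    ∃ C : ℝ, ∀ m t : ℕ, ∀ tinv minv : ℤ, ∀ α : ℕ,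
      0 < m → 0 < t → Nat.Coprime m t → 0 < α →
      (t * tinv) % (m : ℤ) = 1 % (m : ℤ) →
      (m * minv) % (t : ℤ) = 1 % (t : ℤ) →
      ‖e ((α * tinv : ℤ) / (m : ℝ)) - e (-(α * minv : ℤ) / (t : ℝ))‖ ≤
        C * α / (m * t) := by
  refine ⟨4 * Real.pi, ?_⟩
  intro m t tinv minv α hm ht hcop hα h1 h2
  have hm0 : (0 : ℝ) < m := by exact_mod_cast hm
  have ht0 : (0 : ℝ) < t := by exact_mod_cast ht
  have hmt0 : (0 : ℝ) < m * t := mul_pos hm0 ht0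
  have hα0 : (0 : ℝ) ≤ α := by positivity
  -- divisibility
  set N : ℤ := t * tinv + m * minv - 1 with hN
  have hdm : (m : ℤ) ∣ N := by
    obtain ⟨a, ha⟩ := Int.ModEq.dvd (h1 : (t : ℤ) * tinv ≡ 1 [ZMOD (m : ℤ)])
    exact ⟨minv - a, by rw [hN]; linear_combination -ha⟩
  have hdt : (t : ℤ) ∣ N := by
    obtain ⟨b, hb⟩ := Int.ModEq.dvd (h2 : (m : ℤ) * minv ≡ 1 [ZMOD (t : ℤ)])
    exact ⟨tinv - b, by rw [hN]; linear_combination -hb⟩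
  have hcp : IsCoprime (m : ℤ) (t : ℤ) := by
    rw [Int.isCoprime_iff_gcd_eq_one]
    exact_mod_cast hcop
  obtain ⟨k, hk⟩ := hcp.mul_dvd hdm hdt
  -- argument identity
  set y : ℝ := -(α * minv : ℤ) / (t : ℝ) with hy
  set δ : ℝ := α / (m * t : ℝ) with hδ
  have key : (α * tinv : ℤ) / (m : ℝ) = (y + δ) + ((α : ℤ) * k : ℤ) := by
    rw [hy, hδ]
    have hkR : (t : ℝ) * tinv + m * minv - 1 = m * t * k := by exact_mod_cast hk
    field_simp
    push_cast
    linear_combination (α : ℝ) * hkR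
  have hδ0 : 0 ≤ δ := by positivity
  rw [key, e_add_int, e_add]
  have : e y * e δ - e y = e y * (e δ - 1) := by ring
  rw [this, norm_mul, norm_e, one_mul]
  calc ‖e δ - 1‖ ≤ 4 * Real.pi * δ := norm_e_sub_one δ hδ0
    _ = 4 * Real.pi * α / (m * t) := by rw [hδ]; field_simp
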